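/- In a traced Cartesian differential category C, the subcategory LIN[C] of linear maps carries a repetition operator given by f* := fix(π₁ + f ∘ π₂); that is, f* satisfies: (1) f* = 1 + f ∘ f*; (2) (f+g)* = (f* ∘ g)* ∘ f*; (3) (f ∘ g)* ∘ f = f ∘ (g ∘ f)*, for all endomorphisms f, g : X → X in LIN[C]. -/

import Mathlib

open CategoryTheory CategoryTheory.Limits

universe v u

variable (C : Type u) [Category.{v} C] [HasFiniteProducts C]

/-- Cartesian left additive category: hom-sets are commutative monoids,
precomposition is additive, and the projections are additive maps. -/
class CartesianLeftAdditive [∀ A B : C, AddCommMonoid (A ⟶ B)] : Prop where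
  comp_add : ∀ {X A B : C} (x : X ⟶ A) (f g : A ⟶ B), x ≫ (f + g) = x ≫ f + x ≫ g
  comp_zero : ∀ {X A B : C} (x : X ⟶ A), x ≫ (0 : A ⟶ B) = 0
  add_comp_fst : ∀ {X A B : C} (x y : X ⟶ A ⨯ B),
    (x + y) ≫ (prod.fst : A ⨯ B ⟶ A) = x ≫ prod.fst + y ≫ prod.fst
  add_comp_snd : ∀ {X A B : C} (x y : X ⟶ A ⨯ B),
    (x + y) ≫ (prod.snd : A ⨯ B ⟶ B) = x ≫ prod.snd + y ≫ prod.snd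
  zero_comp_fst : ∀ {X A B : C}, (0 : X ⟶ A ⨯ B) ≫ (prod.fst : A ⨯ B ⟶ A) = 0
  zero_comp_snd : ∀ {X A B : C}, (0 : X ⟶ A ⨯ B) ≫ (prod.snd : A ⨯ B ⟶ B) = 0

/-- A differential combinator satisfying the axioms [CD.1]-[CD.7] of a
Cartesian differential category. -/
structure DiffComb [∀ A B : C, AddCommMonoid (A ⟶ B)] where
  D : ∀ {A B : C}, (A ⟶ B) → (A ⨯ A ⟶ B)
  cd1_zero : ∀ {A B : C}, D (0 : A ⟶ B) = 0
  cd1_add : ∀ {A B : C} (f g : A ⟶ B), D (f + g) = D f + D g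
  cd2_zero : ∀ {A B X : C} (f : A ⟶ B) (x : X ⟶ A), prod.lift x 0 ≫ D f = 0
  cd2_add : ∀ {A B X : C} (f : A ⟶ B) (x y z : X ⟶ A),
    prod.lift x (y + z) ≫ D f = prod.lift x y ≫ D f + prod.lift x z ≫ D f
  cd3_id : ∀ {A : C}, D (𝟙 A) = prod.snd
  cd3_fst : ∀ {A B : C},
    D (prod.fst : A ⨯ B ⟶ A) = (prod.snd : (A ⨯ B) ⨯ (A ⨯ B) ⟶ A ⨯ B) ≫ prod.fst
  cd3_snd : ∀ {A B : C},
    D (prod.snd : A ⨯ B ⟶ B) = (prod.snd : (A ⨯ B) ⨯ (A ⨯ B) ⟶ A ⨯ B) ≫ prod.snd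
  cd4 : ∀ {A B B' : C} (f : A ⟶ B) (g : A ⟶ B'), D (prod.lift f g) = prod.lift (D f) (D g)
  cd5 : ∀ {A B E : C} (f : A ⟶ B) (g : B ⟶ E), D (f ≫ g) = prod.lift (prod.fst ≫ f) (D f) ≫ D g
  cd6 : ∀ {A B X : C} (f : A ⟶ B) (x y z : X ⟶ A),
    prod.lift (prod.lift x y) (prod.lift 0 z) ≫ D (D f) = prod.lift x z ≫ D f
  cd7 : ∀ {A B X : C} (f : A ⟶ B) (x y z : X ⟶ A),
    prod.lift (prod.lift x y) (prod.lift z 0) ≫ D (D f) =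
      prod.lift (prod.lift x z) (prod.lift y 0) ≫ D (D f)

variable {C}

/-- The tangent bundle functor on maps: `T f = ⟨f ∘ π₁, D[f]⟩`. -/
noncomputable def DiffComb.T [∀ A B : C, AddCommMonoid (A ⟶ B)] (Dc : DiffComb C) {A B : C}
    (f : A ⟶ B) : A ⨯ A ⟶ B ⨯ B :=
  prod.lift (prod.fst ≫ f) (Dc.D f)

/-- The canonical middle-swap isomorphism `c = ⟨π₁,π₃,π₂,π₄⟩`. -/
noncomputable def cmap (A B X Y : C) : (A ⨯ B) ⨯ (X ⨯ Y) ⟶ (A ⨯ X) ⨯ (B ⨯ Y) :=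
  prod.lift (prod.map prod.fst prod.fst) (prod.map prod.snd prod.snd)

/-- A parametrized fixpoint operator. -/
structure ParamFix (C : Type u) [Category.{v} C] [HasFiniteProducts C] where
  fix : ∀ {A X : C}, (A ⨯ X ⟶ X) → (A ⟶ X)
  fix_eq : ∀ {A X : C} (f : A ⨯ X ⟶ X), prod.lift (𝟙 A) (fix f) ≫ f = fix f
  natural : ∀ {A B X : C} (g : A ⟶ B) (f : B ⨯ X ⟶ X),
    g ≫ fix f = fix (prod.map g (𝟙 X) ≫ f)

/-- The associativity map `(A ⨯ X) ⨯ Y ⟶ A ⨯ (X ⨯ Y)`. -/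
noncomputable def assoc3 (A X Y : C) : (A ⨯ X) ⨯ Y ⟶ A ⨯ (X ⨯ Y) :=
  prod.lift (prod.fst ≫ prod.fst) (prod.lift (prod.fst ≫ prod.snd) prod.snd)

/-- A Conway operator: a parametrized fixpoint operator satisfying
dinaturality and Bekič's axiom. -/
structure Conway (C : Type u) [Category.{v} C] [HasFiniteProducts C]
    extends ParamFix C where
  dinat : ∀ {A X Y : C} (f : A ⨯ X ⟶ Y) (g : Y ⟶ X),
    fix (f ≫ g) = fix (prod.map (𝟙 A) g ≫ f) ≫ g
  bekic : ∀ {A X Y : C} (f : A ⨯ (X ⨯ Y) ⟶ X) (g : A ⨯ (X ⨯ Y) ⟶ Y),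
    fix (prod.lift f g) =
      prod.lift
        (fix (prod.lift (𝟙 (A ⨯ X)) (fix (assoc3 A X Y ≫ g)) ≫ assoc3 A X Y ≫ f))
        (fix (prod.lift (prod.fst : A ⨯ Y ⟶ A)
          (prod.lift
            ((prod.fst : A ⨯ Y ⟶ A) ≫
              fix (prod.lift (𝟙 (A ⨯ X)) (fix (assoc3 A X Y ≫ g)) ≫ assoc3 A X Y ≫ f))
            (prod.snd : A ⨯ Y ⟶ Y)) ≫ g))

/-- The repetition operator `f* = fix(π₁ + f ∘ π₂)` induced by a parametrized
fixpoint operator. -/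
noncomputable def repStar [∀ A B : C, AddCommMonoid (A ⟶ B)] (P : ParamFix C)
    {X : C} (f : X ⟶ X) : X ⟶ X :=
  P.fix ((prod.fst : X ⨯ X ⟶ X) + (prod.snd : X ⨯ X ⟶ X) ≫ f)

section Aux

variable [∀ A B : C, AddCommMonoid (A ⟶ B)] [CartesianLeftAdditive C]

open CartesianLeftAdditive in
/-- Linear maps are additive for precomposition. -/
lemma add_comp_of_linear (Dc : DiffComb C) {A B Z : C} (f : A ⟶ B)
    (hf : Dc.D f = prod.snd ≫ f) (y z : Z ⟶ A) :
    (y + z) ≫ f = y ≫ f + z ≫ f := by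
  have h := Dc.cd2_add f y y z
  simp only [hf, prod.lift_snd_assoc] at h
  exact h

open CartesianLeftAdditive in
/-- The fixpoint axiom for the repetition operator. -/
lemma repStar_fixpoint (P : ParamFix C) {X : C} (f : X ⟶ X) :
    repStar P f = 𝟙 X + repStar P f ≫ f := by
  have h := P.fix_eq ((prod.fst : X ⨯ X ⟶ X) + prod.snd ≫ f)
  rw [comp_add] at h
  simp only [prod.lift_fst, prod.lift_snd_assoc] at h
  rw [repStar]
  exact h.symm

open CartesianLeftAdditive in
/-- The dinaturality axiom for the repetition operator. -/
lemma repStar_dinat (Cw : Conway C) {X : C} (f g : X ⟶ X)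
    (haddf : ∀ (y z : X ⨯ X ⟶ X), (y + z) ≫ f = y ≫ f + z ≫ f) :
    f ≫ repStar Cw.toParamFix (g ≫ f) = repStar Cw.toParamFix (f ≫ g) ≫ f := by
  have h1 : f ≫ repStar Cw.toParamFix (g ≫ f)
      = Cw.fix (((prod.fst : X ⨯ X ⟶ X) + prod.snd ≫ g) ≫ f) := by
    rw [repStar, Cw.natural]
    congr 1
    rw [comp_add, haddf]
    simp [comp_add]
  have h2 : Cw.fix (((prod.fst : X ⨯ X ⟶ X) + prod.snd ≫ g) ≫ f)
      = repStar Cw.toParamFix (f ≫ g) ≫ f := by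
    rw [Cw.dinat, repStar]
    congr 2
    rw [comp_add]
    simp
  rw [h1, h2]

open CartesianLeftAdditive in
/-- The linearity of the repetition operator. -/
lemma repStar_linear (Dc : DiffComb C) (Cw : Conway C)
    (hdf : ∀ {A X : C} (f : A ⨯ X ⟶ X),
      Dc.D (Cw.fix f) = Cw.fix (cmap A A X X ≫ Dc.T f) ≫ prod.snd)
    {X : C} (f : X ⟶ X) (hf : Dc.D f = prod.snd ≫ f) :
    Dc.D (repStar Cw.toParamFix f) = prod.snd ≫ repStar Cw.toParamFix f := by
  set k : X ⨯ X ⟶ X := (prod.fst : X ⨯ X ⟶ X) + prod.snd ≫ f with hk_def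
  have hk : Dc.D k = prod.snd ≫ k := by
    rw [hk_def, Dc.cd1_add, Dc.cd3_fst, Dc.cd5, Dc.cd3_snd, hf, comp_add]
    simp
  have hT : cmap X X X X ≫ Dc.T k
      = prod.lift (prod.map prod.fst prod.fst ≫ k) (prod.map prod.snd prod.snd ≫ k) := by
    rw [DiffComb.T, hk, prod.comp_lift]
    congr 1
    · rw [cmap, prod.lift_fst_assoc]
    · rw [cmap, prod.lift_snd_assoc]
  have hb := Cw.bekic (prod.map prod.fst prod.fst ≫ k) (prod.map prod.snd prod.snd ≫ k)
  rw [repStar, hdf, hT, hb, prod.lift_snd]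
  have hpre : prod.lift (prod.fst : (X ⨯ X) ⨯ X ⟶ X ⨯ X)
        (prod.lift (prod.fst ≫
          Cw.fix (prod.lift (𝟙 ((X ⨯ X) ⨯ X))
              (Cw.fix (assoc3 (X ⨯ X) X X ≫ (prod.map prod.snd prod.snd ≫ k)))
            ≫ assoc3 (X ⨯ X) X X ≫ (prod.map prod.fst prod.fst ≫ k))) prod.snd)
        ≫ prod.map prod.snd prod.snd = prod.map prod.snd (𝟙 X) := by
    apply Limits.prod.hom_ext
    · simp
      rw [prod.lift_snd, prod.lift_fst]
    · simp
      rw [prod.lift_snd, prod.lift_snd]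
  rw [Cw.natural prod.snd k]
  congr 1
  rw [← Category.assoc, hpre]

open CartesianLeftAdditive in
/-- The addition axiom for the repetition operator. -/
lemma repStar_add (Cw : Conway C) {X : C} (f g : X ⟶ X)
    (hadds : ∀ (Z : C) (y z : Z ⟶ X), (y + z) ≫ repStar Cw.toParamFix f
      = y ≫ repStar Cw.toParamFix f + z ≫ repStar Cw.toParamFix f) :
    repStar Cw.toParamFix (f + g) =
      repStar Cw.toParamFix f ≫ repStar Cw.toParamFix (g ≫ repStar Cw.toParamFix f) := by
  set fs := repStar Cw.toParamFix f with hfs_def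
  set h₂ : X ⨯ (X ⨯ X) ⟶ X :=
    (prod.fst : X ⨯ (X ⨯ X) ⟶ X) + prod.snd ≫ prod.fst ≫ g + prod.snd ≫ prod.snd ≫ f
    with hh2_def
  -- step 1: repStar (f+g) is the second component of the fixpoint of (h₂, h₂)
  have hdiag : Cw.fix (prod.lift h₂ h₂)
      = prod.lift (repStar Cw.toParamFix (f + g)) (repStar Cw.toParamFix (f + g)) := by
    have e1 : prod.lift h₂ h₂ = h₂ ≫ prod.lift (𝟙 X) (𝟙 X) := by
      rw [prod.comp_lift, Category.comp_id]
    rw [e1, Cw.dinat, repStar]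
    have e2 : prod.map (𝟙 X) (prod.lift (𝟙 X) (𝟙 X)) ≫ h₂
        = (prod.fst : X ⨯ X ⟶ X) + prod.snd ≫ (f + g) := by
      rw [hh2_def, comp_add, comp_add, comp_add]
      simp only [prod.map_fst, prod.map_snd_assoc, prod.lift_fst_assoc, prod.lift_snd_assoc,
        Category.comp_id, Category.id_comp]
      abel
    rw [e2, prod.comp_lift, Category.comp_id]
  -- step 2: beef up Bekič
  have hassoc : assoc3 X X X ≫ h₂
      = (prod.fst ≫ prod.fst : (X ⨯ X) ⨯ X ⟶ X) + prod.fst ≫ prod.snd ≫ g + prod.snd ≫ f := by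
    rw [hh2_def, comp_add, comp_add]
    simp only [assoc3]
    rw [prod.lift_fst, prod.lift_snd_assoc, prod.lift_fst_assoc, prod.lift_snd_assoc,
      prod.lift_snd_assoc, Category.assoc]
  have hs : Cw.fix (assoc3 X X X ≫ h₂)
      = ((prod.fst : X ⨯ X ⟶ X) + prod.snd ≫ g) ≫ fs := by
    rw [hfs_def, repStar, Cw.natural, hassoc]
    congr 1
    simp only [comp_add, prod.map_fst, prod.map_snd_assoc, Category.id_comp, Category.assoc]
  set q : X ⨯ X ⟶ X := (prod.fst : X ⨯ X ⟶ X) + prod.snd ≫ g with hq_def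
  have hu : prod.lift (𝟙 (X ⨯ X)) (Cw.fix (assoc3 X X X ≫ h₂)) ≫ assoc3 X X X ≫ h₂
      = q ≫ fs := by
    rw [hs, hassoc]
    simp only [comp_add, prod.lift_fst_assoc, prod.lift_snd_assoc, Category.id_comp,
      Category.assoc]
    have hfs2 : fs = 𝟙 X + fs ≫ f := by
      rw [hfs_def]; exact repStar_fixpoint Cw.toParamFix f
    conv_rhs => rw [hfs2]
    rw [comp_add, Category.comp_id, hq_def]
  set R := fs ≫ repStar Cw.toParamFix (g ≫ fs) with hR_def
  have hfixu : Cw.fix (q ≫ fs) = R := by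
    rw [hR_def, repStar, Cw.natural]
    congr 1
    simp only [hq_def, hadds, comp_add, prod.map_fst, prod.map_snd_assoc,
      Category.id_comp, Category.assoc]
  -- second Bekič component
  have hb := Cw.bekic h₂ h₂
  rw [hu, hfixu] at hb
  have hfixv : Cw.fix (prod.lift (prod.fst : X ⨯ X ⟶ X)
        (prod.lift (prod.fst ≫ R) prod.snd) ≫ h₂)
      = (𝟙 X + R ≫ g) ≫ fs := by
    rw [hfs_def, repStar, Cw.natural]
    congr 1
    simp only [hh2_def, comp_add, prod.lift_fst, prod.lift_fst_assoc, prod.lift_snd_assoc,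
      prod.map_fst, prod.map_snd_assoc, Category.id_comp, Category.comp_id, Category.assoc]
  rw [hfixv] at hb
  have hfinal : repStar Cw.toParamFix (f + g) = (𝟙 X + R ≫ g) ≫ fs := by
    have h6 := hdiag.symm.trans hb
    have h7 := congrArg (fun t => t ≫ (prod.snd : X ⨯ X ⟶ X)) h6
    rw [prod.lift_snd, prod.lift_snd] at h7
    exact h7
  rw [hfinal, hadds, Category.id_comp]
  conv_rhs => rw [hR_def, repStar_fixpoint Cw.toParamFix (g ≫ fs)]
  rw [comp_add, Category.comp_id]
  simp [hR_def, Category.assoc]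

end Aux

/-- in a traced Cartesian differential category, `f* := fix(π₁ + f∘π₂)`
is a repetition operator on the subcategory of linear maps: it maps linear maps to
linear maps and satisfies the fixpoint, addition and dinaturality axioms. -/
theorem repetition_operator_on_linear_maps
    [∀ A B : C, AddCommMonoid (A ⟶ B)] [CartesianLeftAdditive C]
    (Dc : DiffComb C) (Cw : Conway C)
    (hdf : ∀ {A X : C} (f : A ⨯ X ⟶ X),
      Dc.D (Cw.fix f) = Cw.fix (cmap A A X X ≫ Dc.T f) ≫ prod.snd)
    {X : C} (f g : X ⟶ X)
    (hf : Dc.D f = prod.snd ≫ f) (hg : Dc.D g = prod.snd ≫ g) :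
    (Dc.D (repStar Cw.toParamFix f) = prod.snd ≫ repStar Cw.toParamFix f) ∧
    (repStar Cw.toParamFix f = 𝟙 X + repStar Cw.toParamFix f ≫ f) ∧
    (repStar Cw.toParamFix (f + g) =
      repStar Cw.toParamFix f ≫ repStar Cw.toParamFix (g ≫ repStar Cw.toParamFix f)) ∧
    (f ≫ repStar Cw.toParamFix (g ≫ f) = repStar Cw.toParamFix (f ≫ g) ≫ f) := by
  have hlin := repStar_linear Dc Cw (fun {A X} f => hdf f) f hf
  refine ⟨hlin, repStar_fixpoint Cw.toParamFix f, ?_, ?_⟩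
  · exact repStar_add Cw f g (fun Z y z => add_comp_of_linear Dc _ hlin y z)
  · exact repStar_dinat Cw f g (fun y z => add_comp_of_linear Dc f hf y z)
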